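/- If (qₙ) is a sequence of reals and (aₙ) is defined by a₀ := q₀, a₁ := q₁ − q₀, and aₙ := (q_{m+1} − qₘ)/2^{m−1} for n ≥ 2 with m := ⌈log₂ n⌉, then the partial sums satisfy s_{2ⁿ} = q_{n+1} for all n ≥ 1. -/

import Mathlib

theorem specker_partial_sum_identity (q a : ℕ → ℝ)
    (ha0 : a 0 = q 0) (ha1 : a 1 = q 1 - q 0)
    (han : ∀ n, 2 ≤ n →
      a n = (q (Nat.clog 2 n + 1) - q (Nat.clog 2 n)) / 2 ^ (Nat.clog 2 n - 1)) :
    ∀ n, 1 ≤ n → ∑ i ∈ Finset.range (2^n + 1), a i = q (n + 1) := by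
  have key : ∀ n, ∀ i, 2^n < i → i ≤ 2^(n+1) → Nat.clog 2 i = n + 1 := by
    intro n i h1 h2
    have hle : Nat.clog 2 i ≤ n + 1 := (Nat.clog_le_iff_le_pow one_lt_two).2 h2
    have hlt : n < Nat.clog 2 i := (Nat.lt_clog_iff_pow_lt one_lt_two).2 h1
    omega
  have step : ∀ n, 1 ≤ n →
      ∑ i ∈ Finset.range (2^(n+1) + 1), a i
        = (∑ i ∈ Finset.range (2^n + 1), a i) + (q (n+2) - q (n+1)) := by
    intro n hn
    have hsplit : ∑ i ∈ Finset.range (2^(n+1) + 1), a i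
        = (∑ i ∈ Finset.range (2^n + 1), a i)
          + ∑ i ∈ Finset.Ico (2^n + 1) (2^(n+1) + 1), a i := by
      have hle : 2^n + 1 ≤ 2^(n+1) + 1 := by
        have := Nat.pow_le_pow_right (by norm_num : 1 ≤ 2) (Nat.le_succ n)
        omega
      rw [Finset.range_eq_Ico,
        ← Finset.sum_Ico_consecutive a (Nat.zero_le _) hle, Finset.range_eq_Ico]
    rw [hsplit]
    congr 1
    have hconst : ∀ i ∈ Finset.Ico (2^n + 1) (2^(n+1) + 1),
        a i = (q (n+2) - q (n+1)) / 2 ^ n := by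
      intro i hi
      simp only [Finset.mem_Ico] at hi
      have h2i : 2 ≤ i := by
        have : 2 ≤ 2^n := Nat.one_lt_two_pow_iff.2 (by omega)
        omega
      rw [han i h2i, key n i (by omega) (by omega)]
      norm_num
    rw [Finset.sum_congr rfl hconst, Finset.sum_const, Nat.card_Ico]
    have hcard : 2^(n+1) + 1 - (2^n + 1) = 2^n := by
      rw [pow_succ]; omega
    rw [hcard, nsmul_eq_mul]
    have h2n : (2:ℝ)^n ≠ 0 := by positivity
    push_cast
    field_simp
  intro n hn
  induction n with
  | zero => omega
  | succ m ih =>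
    rcases Nat.eq_or_lt_of_le hn with h | h
    · -- m + 1 = 1, i.e. m = 0
      have hm : m = 0 := by omega
      subst hm
      have h2 : Nat.clog 2 2 = 1 := by
        simpa using Nat.clog_pow 2 1 one_lt_two
      simp [Finset.sum_range_succ, ha0, ha1, han 2 le_rfl, h2]
    · have hm : 1 ≤ m := by omega
      rw [step m hm, ih hm]
      ring
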